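/- Let A be a unital complex C*-algebra, let a ∈ A be selfadjoint and let b ∈ A. Let f : ℝ → ℂ be a bounded continuous integrable function such that p ↦ p·f̂(p) is integrable. Then ‖f(a)·b − b·f(a)‖ ≤ ‖a·b − b·a‖ · (2π)^{−1/2} · ∫_ℝ |p·f̂(p)| dp, where f(a) denotes the continuous functional calculus of a applied to f. -/

import Mathlib

open MeasureTheory

/-- The Fourier transform `f̂(p) = (2π)^{-1/2} ∫ f(x) e^{-ixp} dx` of a function `f : ℝ → ℂ`. -/
noncomputable def fourierHat (f : ℝ → ℂ) (p : ℝ) : ℂ :=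
  (Real.sqrt (2 * Real.pi) : ℂ)⁻¹ * ∫ x : ℝ, f x * Complex.exp (-(Complex.I * x * p))

section Aux

open NormedSpace Complex
open scoped FourierTransform Real

/-! ### Fourier analysis auxiliary results -/

lemma fourierHat_eq_fourierIntegral (f : ℝ → ℂ) (p : ℝ) :
    fourierHat f p = (Real.sqrt (2 * Real.pi) : ℂ)⁻¹ * 𝓕 f (p / (2 * Real.pi)) := by
  unfold fourierHat
  rw [Real.fourier_real_eq_integral_exp_smul]
  congr 1
  apply integral_congr_ae
  filter_upwards with x
  rw [smul_eq_mul, mul_comm]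
  congr 1
  have hr : (-2 * Real.pi * x * (p / (2 * Real.pi))) = -(x * p) := by
    field_simp
  rw [hr]
  push_cast
  ring_nf

lemma fourierIntegral_eq_fourierHat (f : ℝ → ℂ) (ξ : ℝ) :
    𝓕 f ξ = (Real.sqrt (2 * Real.pi) : ℂ) * fourierHat f (2 * Real.pi * ξ) := by
  rw [fourierHat_eq_fourierIntegral, mul_div_cancel_left₀ _ (by positivity : (2*Real.pi) ≠ 0),
    ← mul_assoc, mul_inv_cancel₀, one_mul]
  simp only [ne_eq, ofReal_eq_zero]
  positivity

lemma fourierHat_continuous {f : ℝ → ℂ} (hf_int : Integrable f) :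
    Continuous (fourierHat f) := by
  have h𝓕 : Continuous (𝓕 f) :=
    VectorFourier.fourierIntegral_continuous Real.continuous_fourierChar
      (by exact continuous_inner) hf_int
  simp only [funext fun p => fourierHat_eq_fourierIntegral f p]
  fun_prop

lemma fourierHat_integrable {f : ℝ → ℂ} (hf_int : Integrable f)
    (hphat_int : Integrable (fun p : ℝ => (p : ℂ) * fourierHat f p)) :
    Integrable (fourierHat f) := by
  have hcont := fourierHat_continuous hf_int
  have h1 : IntegrableOn (fourierHat f) (Set.Icc (-1) 1) :=
    hcont.continuousOn.integrableOn_compact isCompact_Icc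
  have h2 : IntegrableOn (fourierHat f) (Set.Icc (-1:ℝ) 1)ᶜ := by
    apply Integrable.mono (hphat_int.restrict (s := (Set.Icc (-1:ℝ) 1)ᶜ))
      (hcont.aestronglyMeasurable.restrict)
    rw [ae_restrict_iff' measurableSet_Icc.compl]
    filter_upwards with p hp
    simp only [Set.mem_compl_iff, Set.mem_Icc, not_and_or, not_le] at hp
    have h1p : 1 ≤ |p| := by
      rcases hp with h | h
      · rw [abs_of_neg (by linarith)]; linarith
      · rw [abs_of_pos (by linarith)]; linarith
    calc ‖fourierHat f p‖ = 1 * ‖fourierHat f p‖ := (one_mul _).symm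
      _ ≤ |p| * ‖fourierHat f p‖ := by
          apply mul_le_mul_of_nonneg_right h1p (norm_nonneg _)
      _ = ‖(p:ℂ) * fourierHat f p‖ := by
          rw [norm_mul]
          simp
  have := h1.union h2
  rwa [Set.union_compl_self, integrableOn_univ] at this

/-- **Fourier inversion** in the symmetric normalization. -/
lemma fourierHat_inversion {f : ℝ → ℂ} (hf_cont : Continuous f) (hf_int : Integrable f)
    (hphat_int : Integrable (fun p : ℝ => (p : ℂ) * fourierHat f p)) (x : ℝ) :
    f x = (Real.sqrt (2 * Real.pi) : ℂ)⁻¹ *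
      ∫ p : ℝ, fourierHat f p * Complex.exp (I * p * x) := by
  have hhat_int : Integrable (fourierHat f) := fourierHat_integrable hf_int hphat_int
  have h𝓕_int : Integrable (𝓕 f) := by
    have : Integrable (fun ξ : ℝ => fourierHat f (2 * Real.pi * ξ)) :=
      hhat_int.comp_mul_left' (by positivity)
    simp only [funext fun ξ => fourierIntegral_eq_fourierHat f ξ]
    exact (this.const_mul _)
  have hinv := hf_cont.fourierInv_fourier_eq hf_int h𝓕_int
  have hx : f x = 𝓕⁻ (𝓕 f) x := by rw [hinv]
  rw [hx, Real.fourierInv_eq']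
  have hstep : ∀ v : ℝ, Complex.exp (((2 * Real.pi * (inner ℝ v x : ℝ) : ℝ) : ℂ) * I) • 𝓕 f v
      = (Real.sqrt (2 * Real.pi) : ℂ) •
        ((fun p : ℝ => fourierHat f p * Complex.exp (I * (p : ℂ) * x)) (2 * Real.pi * v)) := by
    intro v
    rw [fourierIntegral_eq_fourierHat]
    have hin : (inner ℝ v x : ℝ) = v * x := by
      simp [RCLike.inner_apply, mul_comm]
    have harg : ((2 * Real.pi * (inner ℝ v x : ℝ) : ℝ) : ℂ) * I
        = I * ((2 * Real.pi * v : ℝ) : ℂ) * x := by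
      rw [hin]; push_cast; ring
    rw [harg]
    simp only [smul_eq_mul]
    push_cast
    ring
  simp only [hstep]
  rw [integral_smul, MeasureTheory.Measure.integral_comp_mul_left
    (fun p : ℝ => fourierHat f p * Complex.exp (I * (p : ℂ) * x)) (2 * Real.pi)]
  rw [Complex.real_smul, smul_eq_mul, ← mul_assoc]
  congr 1
  have hkey : Real.sqrt (2 * Real.pi) * |(2 * Real.pi)⁻¹| = (Real.sqrt (2 * Real.pi))⁻¹ := by
    rw [abs_of_pos (by positivity)]
    rw [show (2 * Real.pi) = Real.sqrt (2 * Real.pi) * Real.sqrt (2 * Real.pi) from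
      (Real.mul_self_sqrt (by positivity)).symm]
    have hs : Real.sqrt (2 * Real.pi) ≠ 0 := by positivity
    field_simp
    rw [Real.sqrt_sq (Real.sqrt_nonneg _)]
  calc (Real.sqrt (2 * Real.pi) : ℂ) * ((|(2 * Real.pi)⁻¹| : ℝ) : ℂ)
      = ((Real.sqrt (2 * Real.pi) * |(2 * Real.pi)⁻¹| : ℝ) : ℂ) := by push_cast; ring
    _ = ((Real.sqrt (2 * Real.pi))⁻¹ : ℝ) := by rw [hkey]
    _ = (Real.sqrt (2 * Real.pi) : ℂ)⁻¹ := by push_cast; ring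

/-! ### C*-algebra auxiliary results -/

variable {A : Type*} [CStarAlgebra A]

noncomputable instance : NormedAlgebra ℚ A := NormedAlgebra.restrictScalars ℚ ℂ A

lemma norm_exp_skewAdjoint [Nontrivial A] {c : A} (hc : c ∈ skewAdjoint A) : ‖exp c‖ = 1 :=
  CStarRing.norm_of_mem_unitary (exp_mem_unitary_of_mem_skewAdjoint hc)

lemma smul_smul_mem_skewAdjoint (a : A) (ha : IsSelfAdjoint a) (p s : ℝ) :
    s • ((I * (p:ℂ)) • a) ∈ skewAdjoint A := by
  rw [skewAdjoint.mem_iff]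
  simp [star_smul, ha.star_eq, smul_smul, ← RCLike.star_def, star_mul, mul_comm]

lemma mem_skewAdjoint_of_selfAdjoint (a : A) (ha : IsSelfAdjoint a) (p : ℝ) :
    ((I * (p:ℂ)) • a) ∈ skewAdjoint A := by
  simpa using smul_smul_mem_skewAdjoint a ha p 1

/-- The key commutator estimate for the unitary group generated by a selfadjoint element:
`‖[e^{ipa}, b]‖ ≤ |p| ‖[a,b]‖`. -/
lemma norm_commutator_exp_le [Nontrivial A] (a b : A) (ha : IsSelfAdjoint a) (p : ℝ) :
    ‖exp ((I * (p:ℂ)) • a) * b - b * exp ((I * (p:ℂ)) • a)‖ ≤ |p| * ‖a * b - b * a‖ := by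
  set c : A := (I * (p:ℂ)) • a with hc
  have hcomm : ∀ s : ℝ, Commute c (exp (s • c)) := by
    intro s
    have : Commute c (s • c) := (Commute.refl c).smul_right s
    simpa using this.exp_right
  have hexp : ∀ s : ℝ, HasDerivAt (fun u : ℝ => exp (u • c)) (exp (s • c) * c) s := by
    intro s
    simpa using hasDerivAt_exp_smul_const c s
  set g : ℝ → A := fun s => exp ((1 - s) • c) * b * exp (s • c) with hg
  have hderiv : ∀ s : ℝ, HasDerivAt g
      (exp ((1 - s) • c) * (b * c - c * b) * exp (s • c)) s := by
    intro s
    have h0 : HasDerivAt (fun u : ℝ => 1 - u) (-1) s := by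
      simpa using (hasDerivAt_id s).const_sub 1
    have h1 : HasDerivAt (fun u : ℝ => exp ((1 - u) • c)) (-(exp ((1 - s) • c) * c)) s := by
      have := (hexp (1 - s)).scomp s h0
      simpa [Function.comp_def] using this
    have h2 := ((h1.mul_const b).mul (hexp s))
    convert h2 using 1
    · ext u; simp [hg]
    have hc2 : c * exp (s • c) = exp (s • c) * c := (hcomm s).eq
    rw [← hc2]
    noncomm_ring
  have hbound : ∀ s : ℝ, ‖exp ((1 - s) • c) * (b * c - c * b) * exp (s • c)‖
      ≤ |p| * ‖a * b - b * a‖ := by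
    intro s
    calc ‖exp ((1 - s) • c) * (b * c - c * b) * exp (s • c)‖
        ≤ ‖exp ((1 - s) • c) * (b * c - c * b)‖ * ‖exp (s • c)‖ := norm_mul_le _ _
      _ ≤ ‖exp ((1 - s) • c)‖ * ‖b * c - c * b‖ * ‖exp (s • c)‖ :=
          mul_le_mul_of_nonneg_right (norm_mul_le _ _) (norm_nonneg _)
      _ = ‖b * c - c * b‖ := by
          rw [norm_exp_skewAdjoint (smul_smul_mem_skewAdjoint a ha p _),
            norm_exp_skewAdjoint (smul_smul_mem_skewAdjoint a ha p _)]
          ring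
      _ = |p| * ‖a * b - b * a‖ := by
          have : b * c - c * b = (I * (p:ℂ)) • (b * a - a * b) := by
            simp [hc, mul_smul_comm, smul_mul_assoc, smul_sub]
          rw [this, norm_smul]
          simp [norm_sub_rev (b * a)]
  have key : ‖g 1 - g 0‖ ≤ (|p| * ‖a * b - b * a‖) * ‖(1 : ℝ) - 0‖ :=
    (convex_univ (𝕜 := ℝ) (E := ℝ)).norm_image_sub_le_of_norm_hasDerivWithin_le
      (fun s _ => (hderiv s).hasDerivWithinAt) (fun s _ => hbound s) trivial trivial
  have h10 : g 1 - g 0 = b * exp c - exp c * b := by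
    simp [hg, NormedSpace.exp_zero]
  rw [h10] at key
  simp only [sub_zero, norm_one, mul_one] at key
  rw [norm_sub_rev]
  exact key

/-- The continuous map `z ↦ exp(ipz)` on the spectrum. -/
noncomputable def expCM (a : A) (p : ℝ) : C(spectrum ℂ a, ℂ) :=
  ⟨fun z => Complex.exp (I * (p:ℂ) * (z : ℂ)), by fun_prop⟩

lemma expCM_eq_exp (a : A) (p : ℝ) :
    expCM a p = exp ((I * (p:ℂ)) • ((ContinuousMap.id ℂ).restrict (spectrum ℂ a))) := by
  ext z
  have hev := map_exp (ContinuousMap.evalAlgHom (S := ℂ) (R := ℂ) (X := spectrum ℂ a) z)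
    (continuous_eval_const z)
    ((I * (p:ℂ)) • ((ContinuousMap.id ℂ).restrict (spectrum ℂ a)))
  simp only [ContinuousMap.evalAlgHom_apply] at hev
  rw [hev]
  simp [expCM, exp_eq_exp_ℂ]

lemma cfcHom_expCM (a : A) (ha' : IsStarNormal a) (p : ℝ) :
    cfcHom ha' (expCM a p) = exp ((I * (p:ℂ)) • a) := by
  rw [expCM_eq_exp]
  rw [map_exp (cfcHom ha' (R := ℂ)) (cfcHom_continuous ha')]
  rw [_root_.map_smul, cfcHom_id ha']

lemma norm_expCM_le (a : A) (ha : IsSelfAdjoint a) (p : ℝ) : ‖expCM a p‖ ≤ 1 := by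
  apply (ContinuousMap.norm_le _ zero_le_one).mpr
  intro z
  have hz : (z : ℂ) = ((z : ℂ).re : ℂ) := ha.mem_spectrum_eq_re z.2
  simp only [expCM, ContinuousMap.coe_mk]
  rw [hz, Complex.norm_exp]
  simp

lemma continuous_expCM (a : A) : Continuous fun p : ℝ => expCM a p := by
  apply ContinuousMap.continuous_of_continuous_uncurry
  have : (Function.uncurry fun (p : ℝ) (z : spectrum ℂ a) => (expCM a p) z)
      = fun q : ℝ × spectrum ℂ a => Complex.exp (I * (q.1 : ℂ) * (q.2 : ℂ)) := rfl
  rw [this]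
  fun_prop

end Aux

/-- **commutator estimate.** For a selfadjoint `a` and arbitrary `b` in a unital
complex C*-algebra, and a bounded continuous integrable `f : ℝ → ℂ` with `p·f̂(p)` integrable,
`‖f(a)b − b·f(a)‖ ≤ ‖ab − ba‖ · (2π)^{-1/2} · ∫ |p·f̂(p)| dp`. -/
theorem norm_commutator_cfc_le
    {A : Type*} [CStarAlgebra A] (a b : A) (ha : IsSelfAdjoint a)
    (f : ℝ → ℂ) (hf_cont : Continuous f) (hf_bdd : ∃ C : ℝ, ∀ x : ℝ, ‖f x‖ ≤ C)
    (hf_int : Integrable f)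
    (hphat_int : Integrable (fun p : ℝ => (p : ℂ) * fourierHat f p)) :
    ‖cfc (fun z : ℂ => f z.re) a * b - b * cfc (fun z : ℂ => f z.re) a‖
      ≤ ‖a * b - b * a‖ *
          ((Real.sqrt (2 * Real.pi))⁻¹ * ∫ p : ℝ, ‖(p : ℂ) * fourierHat f p‖) := by
  open NormedSpace Complex in
  rcases subsingleton_or_nontrivial A with hA | hA
  · have h1 : (cfc (fun z : ℂ => f z.re) a * b - b * cfc (fun z : ℂ => f z.re) a) = 0 :=
      Subsingleton.elim _ _
    rw [h1, norm_zero]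
    positivity
  haveI ha' : IsStarNormal a := ha.isStarNormal
  have hhat_cont : Continuous (fourierHat f) := fourierHat_continuous hf_int
  have hhat_int : Integrable (fourierHat f) := fourierHat_integrable hf_int hphat_int
  -- the C(spectrum, ℂ)-valued integrand
  set g : ℝ → C(spectrum ℂ a, ℂ) := fun p => fourierHat f p • expCM a p with hgdef
  have hg_int : Integrable g := by
    refine Integrable.mono' hhat_int.norm
      ((hhat_cont.smul (continuous_expCM a)).aestronglyMeasurable) ?_
    filter_upwards with p
    show ‖fourierHat f p • expCM a p‖ ≤ ‖fourierHat f p‖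
    rw [norm_smul (fourierHat f p) (expCM a p)]
    calc ‖fourierHat f p‖ * ‖expCM a p‖ ≤ ‖fourierHat f p‖ * 1 :=
      mul_le_mul_of_nonneg_left (norm_expCM_le a ha p) (norm_nonneg _)
    _ = ‖fourierHat f p‖ := mul_one _
  -- the continuity of the restricted function
  have hcont : ContinuousOn (fun z : ℂ => f z.re) (spectrum ℂ a) :=
    (hf_cont.comp Complex.continuous_re).continuousOn
  -- the representation of the restricted function as an integral
  have hFeq : (⟨_, hcont.restrict⟩ : C(spectrum ℂ a, ℂ))
      = (Real.sqrt (2 * Real.pi) : ℂ)⁻¹ • ∫ p : ℝ, g p := by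
    ext z
    have hz : (z : ℂ) = ((z : ℂ).re : ℂ) := ha.mem_spectrum_eq_re z.2
    have heval := (ContinuousMap.evalCLM ℂ z).integral_comp_comm hg_int
    simp only [ContinuousMap.smul_apply]
    have : (∫ p : ℝ, g p) z = ∫ p : ℝ, (g p) z := heval.symm
    rw [this]
    have hgz : ∀ p : ℝ, (g p) z = fourierHat f p * Complex.exp (I * p * ((z:ℂ).re : ℝ)) := by
      intro p
      rw [hgdef]
      simp only [ContinuousMap.smul_apply, expCM, ContinuousMap.coe_mk, smul_eq_mul]
      congr 2
      rw [← hz]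
    simp only [hgz, smul_eq_mul]
    exact fourierHat_inversion hf_cont hf_int hphat_int ((z : ℂ).re)
  -- now express cfc as an integral in A
  have hcfc : cfc (fun z : ℂ => f z.re) a
      = (Real.sqrt (2 * Real.pi) : ℂ)⁻¹ • ∫ p : ℝ, fourierHat f p • exp ((I * (p:ℂ)) • a) := by
    rw [cfc_apply (fun z : ℂ => f z.re) a ha' hcont, hFeq, _root_.map_smul]
    congr 1
    have : cfcHom ha' (∫ p : ℝ, g p) = cfcL (R := ℂ) ha' (∫ p : ℝ, g p) := rfl
    rw [this, ← (cfcL (R := ℂ) ha').integral_comp_comm hg_int]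
    apply integral_congr_ae
    filter_upwards with p
    have : cfcL (R := ℂ) ha' (g p) = cfcHom ha' (g p) := rfl
    rw [this, hgdef]
    simp only [_root_.map_smul]
    rw [cfcHom_expCM a ha' p]
  -- the A-valued integrand after applying the commutator map
  set W : A →L[ℂ] A :=
    (ContinuousLinearMap.mul ℂ A).flip b - ContinuousLinearMap.mul ℂ A b with hWdef
  have hW : ∀ x : A, W x = x * b - b * x := fun x => rfl
  set u : ℝ → A := fun p => fourierHat f p • exp ((I * (p:ℂ)) • a) with hudef
  have hu_int : Integrable u := by
    refine Integrable.mono' hhat_int.norm ?_ ?_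
    · apply Continuous.aestronglyMeasurable
      apply hhat_cont.smul
      have : Continuous fun p : ℝ => (I * (p:ℂ)) • a := by fun_prop
      exact exp_continuous.comp this
    · filter_upwards with p
      rw [hudef, norm_smul, norm_exp_skewAdjoint (mem_skewAdjoint_of_selfAdjoint a ha p), mul_one]
  -- the commutator as an integral
  have hcomm_eq : cfc (fun z : ℂ => f z.re) a * b - b * cfc (fun z : ℂ => f z.re) a
      = (Real.sqrt (2 * Real.pi) : ℂ)⁻¹ • ∫ p : ℝ, W (u p) := by
    rw [W.integral_comp_comm hu_int, hcfc, hW]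
    rw [smul_mul_assoc, mul_smul_comm, ← smul_sub]
  rw [hcomm_eq, norm_smul]
  have hnorm_c : ‖(Real.sqrt (2 * Real.pi) : ℂ)⁻¹‖ = (Real.sqrt (2 * Real.pi))⁻¹ := by
    rw [norm_inv, Complex.norm_real, Real.norm_eq_abs, _root_.abs_of_nonneg (Real.sqrt_nonneg _)]
  rw [hnorm_c]
  have hle1 : ‖∫ p : ℝ, W (u p)‖ ≤ ∫ p : ℝ, ‖a * b - b * a‖ * ‖(p : ℂ) * fourierHat f p‖ := by
    refine (norm_integral_le_integral_norm _).trans ?_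
    refine integral_mono ((W.integrable_comp hu_int).norm) (hphat_int.norm.const_mul _) ?_
    intro p
    show ‖W (u p)‖ ≤ ‖a * b - b * a‖ * ‖(p : ℂ) * fourierHat f p‖
    have hWup : W (u p) = fourierHat f p •
        (exp ((I * (p:ℂ)) • a) * b - b * exp ((I * (p:ℂ)) • a)) := by
      rw [hW, hudef]
      simp only [smul_mul_assoc, mul_smul_comm, smul_sub]
    rw [hWup, norm_smul]
    calc ‖fourierHat f p‖ * ‖exp ((I * (p:ℂ)) • a) * b - b * exp ((I * (p:ℂ)) • a)‖
        ≤ ‖fourierHat f p‖ * (|p| * ‖a * b - b * a‖) :=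
          mul_le_mul_of_nonneg_left (norm_commutator_exp_le a b ha p) (norm_nonneg _)
      _ = ‖a * b - b * a‖ * ‖(p : ℂ) * fourierHat f p‖ := by
          rw [norm_mul, Complex.norm_real, Real.norm_eq_abs]
          ring
  calc (Real.sqrt (2 * Real.pi))⁻¹ * ‖∫ p : ℝ, W (u p)‖
      ≤ (Real.sqrt (2 * Real.pi))⁻¹ * ∫ p : ℝ, ‖a * b - b * a‖ * ‖(p : ℂ) * fourierHat f p‖ :=
        mul_le_mul_of_nonneg_left hle1 (by positivity)
    _ = ‖a * b - b * a‖ *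
        ((Real.sqrt (2 * Real.pi))⁻¹ * ∫ p : ℝ, ‖(p : ℂ) * fourierHat f p‖) := by
        rw [integral_const_mul]
        ring
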